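/- A finite word w is rich if and only if every prefix of w has a unioccurrent palindromic suffix, i.e., for every nonempty prefix u of w, the longest palindromic suffix of u occurs exactly once in u. -/
import Mathlib


/-- The set of palindromic factors of a word `w` (including the empty word). -/
def palFactors {α : Type*} [DecidableEq α] (w : List α) : Finset (List α) :=
  ((w.inits.flatMap List.tails).filter fun u => u.reverse = u).toFinset

/-- A word is rich if it has `|w| + 1` distinct palindromic factors
(including the empty word). -/
def Rich {α : Type*} [DecidableEq α] (w : List α) : Prop :=
  (palFactors w).card = w.length + 1

/-- `s` is the longest palindromic suffix of `u`: a nonempty palindromic suffix of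
maximal length. -/
def IsLPS {α : Type*} (u s : List α) : Prop :=
  s ≠ [] ∧ s.reverse = s ∧ s <:+ u ∧
    ∀ t : List α, t <:+ u → t.reverse = t → t.length ≤ s.length

/-- Number of occurrences of `s` as a factor of `w` (as the number of starting
positions at which `s` occurs). -/
def numOcc {α : Type*} [DecidableEq α] (s w : List α) : ℕ :=
  ((List.range (w.length + 1)).filter fun i => (w.drop i).take s.length = s).length

set_option linter.unusedSectionVars false

section Aux

variable {α : Type*} [DecidableEq α]

lemma mem_palFactors {w s : List α} : s ∈ palFactors w ↔ s <:+: w ∧ s.reverse = s := by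
  simp only [palFactors, List.mem_toFinset, List.mem_filter, List.mem_flatMap, List.mem_inits,
    List.mem_tails, decide_eq_true_eq]
  constructor
  · rintro ⟨⟨p, hp, hsp⟩, hpal⟩
    exact ⟨hsp.isInfix.trans hp.isInfix, hpal⟩
  · rintro ⟨⟨l, r, rfl⟩, hpal⟩
    exact ⟨⟨l ++ s, ⟨r, rfl⟩, ⟨l, rfl⟩⟩, hpal⟩

lemma infix_of_eq_concat {p s r u : List α} {a : α} (hr : r ≠ []) (h : p ++ s ++ r = u ++ [a]) :
    s <:+: u := by
  obtain ⟨r', b, rfl⟩ := r.eq_nil_or_concat.resolve_left hr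
  simp only [List.concat_eq_append] at h
  rw [show p ++ s ++ (r' ++ [b]) = (p ++ s ++ r') ++ [b] by simp] at h
  obtain ⟨h1, -⟩ := List.append_inj' h rfl
  exact ⟨p, r', h1⟩

lemma infix_concat {s u : List α} {a : α} (h : s <:+: u ++ [a]) : s <:+: u ∨ s <:+ u ++ [a] := by
  obtain ⟨p, r, hh⟩ := h
  rcases eq_or_ne r [] with rfl | hr
  · right; exact ⟨p, by simpa using hh⟩
  · left; exact infix_of_eq_concat hr hh

lemma pal_suffix_infix {s t u : List α} {a : α} (hs : s <:+ u ++ [a]) (ht : t <:+ u ++ [a])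
    (hps : s.reverse = s) (hpt : t.reverse = t) (hlt : s.length < t.length) : s <:+: u := by
  have hst : s <:+ t := List.suffix_of_suffix_length_le hs ht hlt.le
  have hspre : s <+: t := by
    have h2 : s.reverse <+: t.reverse := List.reverse_prefix.2 hst
    rwa [hps, hpt] at h2
  obtain ⟨r, rfl⟩ := hspre
  have hr : r ≠ [] := by rintro rfl; simp at hlt
  obtain ⟨p, hp⟩ := ht
  exact infix_of_eq_concat hr (by rw [List.append_assoc]; exact hp)

lemma exists_isLPS (u : List α) (h : u ≠ []) : ∃ s, IsLPS u s := by
  classical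
  let S : Finset (List α) :=
    (u.tails.filter fun t => !t.isEmpty && decide (t.reverse = t)).toFinset
  have hmem : ∀ t : List α, t ∈ S ↔ t <:+ u ∧ t ≠ [] ∧ t.reverse = t := by
    intro t
    simp [S, List.mem_filter, List.isEmpty_iff, and_assoc]
  have hSne : S.Nonempty := by
    refine ⟨[u.getLast h],
      (hmem _).2 ⟨⟨u.dropLast, List.dropLast_append_getLast h⟩, by simp, by simp⟩⟩
  obtain ⟨s, hsS, hsmax⟩ := S.exists_max_image List.length hSne
  obtain ⟨hsuf, hne, hpal⟩ := (hmem s).1 hsS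
  refine ⟨s, hne, hpal, hsuf, fun t ht hpt => ?_⟩
  rcases eq_or_ne t [] with rfl | htne
  · simp
  · exact hsmax t ((hmem t).2 ⟨ht, htne, hpt⟩)

lemma IsLPS.unique {u s t : List α} (hs : IsLPS u s) (ht : IsLPS u t) : s = t := by
  have h1 := hs.2.2.2 t ht.2.2.1 ht.2.1
  have h2 := ht.2.2.2 s hs.2.2.1 hs.2.1
  exact List.IsSuffix.eq_of_length
    (List.suffix_of_suffix_length_le hs.2.2.1 ht.2.2.1 h2) (le_antisymm h2 h1)

lemma occ_le {s w : List α} {i : ℕ} (hne : s ≠ []) (h : (w.drop i).take s.length = s) :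
    i + s.length ≤ w.length := by
  have h1 := congrArg List.length h
  simp only [List.length_take, List.length_drop] at h1
  have h2 : 0 < s.length := List.length_pos_iff.2 hne
  omega

lemma infix_iff_occ {s w : List α} :
    s <:+: w ↔ ∃ i, i + s.length ≤ w.length ∧ (w.drop i).take s.length = s := by
  constructor
  · rintro ⟨p, q, rfl⟩
    refine ⟨p.length, by simp, ?_⟩
    rw [List.append_assoc, List.drop_left, List.take_left]
  · rintro ⟨i, hi, h2⟩
    have key := List.take_append_drop s.length (w.drop i)
    rw [h2] at key
    refine ⟨w.take i, (w.drop i).drop s.length, ?_⟩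
    rw [List.append_assoc, key, List.take_append_drop]

lemma drop_take_concat {u s : List α} {a : α} {i : ℕ} (h : i + s.length ≤ u.length) :
    ((u ++ [a]).drop i).take s.length = (u.drop i).take s.length := by
  rw [List.drop_append_of_le_length (by omega),
    List.take_append_of_le_length (by simp [List.length_drop]; omega)]

lemma numOcc_eq_card (s w : List α) :
    numOcc s w =
      ((Finset.range (w.length + 1)).filter fun i => (w.drop i).take s.length = s).card := rfl

lemma numOcc_eq_one_iff {s u : List α} {a : α} (hne : s ≠ []) (hsuf : s <:+ u ++ [a]) :
    numOcc s (u ++ [a]) = 1 ↔ ¬ s <:+: u := by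
  set v := u ++ [a] with hv
  have hvlen : v.length = u.length + 1 := by simp [hv]
  have hslen : s.length ≤ v.length := hsuf.length_le
  have hspos : 0 < s.length := List.length_pos_iff.2 hne
  set i₀ := v.length - s.length with hi₀
  have hP₀ : (v.drop i₀).take s.length = s := by
    obtain ⟨p, hp⟩ := hsuf
    have hplen : p.length = i₀ := by
      have := congrArg List.length hp
      simp only [List.length_append] at this
      omega
    rw [← hp, ← hplen, List.drop_left, List.take_length]
  rw [numOcc_eq_card]
  constructor
  · intro h1 hinf
    exfalso
    obtain ⟨j, hj, hPj⟩ := infix_iff_occ.1 hinf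
    have hPvj : (v.drop j).take s.length = s := by
      rw [hv, drop_take_concat hj]; exact hPj
    have hne' : j ≠ i₀ := by omega
    have : 1 < ((Finset.range (v.length + 1)).filter
        fun i => (v.drop i).take s.length = s).card := by
      apply Finset.one_lt_card.2
      refine ⟨j, ?_, i₀, ?_, hne'⟩ <;>
        simp only [Finset.mem_filter, Finset.mem_range] <;> constructor
      · omega
      · exact hPvj
      · omega
      · exact hP₀
    omega
  · intro hninf
    rw [Finset.card_eq_one]
    refine ⟨i₀, Finset.eq_singleton_iff_unique_mem.2 ⟨?_, ?_⟩⟩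
    · simp only [Finset.mem_filter, Finset.mem_range]
      exact ⟨by omega, hP₀⟩
    · intro i hi
      simp only [Finset.mem_filter, Finset.mem_range] at hi
      obtain ⟨-, hPi⟩ := hi
      by_contra hne'
      have hle := occ_le hne hPi
      have hiu : i + s.length ≤ u.length := by omega
      exact hninf (infix_iff_occ.2 ⟨i, hiu, by rw [← drop_take_concat hiu, ← hv]; exact hPi⟩)

lemma palFactors_concat {u s : List α} {a : α} (hlps : IsLPS (u ++ [a]) s) :
    palFactors (u ++ [a]) = insert s (palFactors u) := by
  obtain ⟨hne, hpal, hsuf, hmax⟩ := hlps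
  ext t
  simp only [mem_palFactors, Finset.mem_insert]
  constructor
  · rintro ⟨hinf, hp⟩
    rcases infix_concat hinf with h | h
    · exact Or.inr ⟨h, hp⟩
    · rcases eq_or_lt_of_le (hmax t h hp) with heq | hlt
      · exact Or.inl (List.IsSuffix.eq_of_length
          (List.suffix_of_suffix_length_le h hsuf (le_of_eq heq)) heq)
      · exact Or.inr ⟨pal_suffix_infix h hsuf hp hpal hlt, hp⟩
  · rintro (rfl | ⟨hinf, hp⟩)
    · exact ⟨hsuf.isInfix, hpal⟩
    · exact ⟨hinf.trans (List.prefix_append u [a]).isInfix, hp⟩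

lemma palFactors_nil : palFactors ([] : List α) = {[]} := by
  ext t
  simp only [mem_palFactors, Finset.mem_singleton]
  constructor
  · rintro ⟨h, -⟩
    exact List.eq_nil_of_sublist_nil h.sublist
  · rintro rfl
    exact ⟨List.infix_rfl, rfl⟩

lemma card_palFactors_le (w : List α) : (palFactors w).card ≤ w.length + 1 := by
  induction w using List.reverseRecOn with
  | nil => rw [palFactors_nil]; simp
  | append_singleton u a ih =>
    obtain ⟨s, hs⟩ := exists_isLPS (u ++ [a]) (by simp)
    rw [palFactors_concat hs]
    have := Finset.card_insert_le s (palFactors u)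
    simp only [List.length_append, List.length_singleton]
    omega

end Aux

/-- a finite word is rich iff every nonempty prefix has a
unioccurrent longest palindromic suffix. -/
theorem stmt_13 {α : Type*} [DecidableEq α] (w : List α) :
    Rich w ↔ ∀ u : List α, u <+: w → u ≠ [] →
      ∃ s : List α, IsLPS u s ∧ numOcc s u = 1 := by
  induction w using List.reverseRecOn with
  | nil =>
    constructor
    · intro _ u hu hne
      exact absurd (List.prefix_nil.mp hu) hne
    · intro _
      show (palFactors ([] : List α)).card = 0 + 1
      rw [palFactors_nil]; simp
  | append_singleton u a ih =>
    obtain ⟨s, hs⟩ := exists_isLPS (u ++ [a]) (by simp)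
    have hone : numOcc s (u ++ [a]) = 1 ↔ s ∉ palFactors u := by
      rw [numOcc_eq_one_iff hs.1 hs.2.2.1, mem_palFactors]
      simp [hs.2.1]
    have hle := card_palFactors_le u
    have hkey : Rich (u ++ [a]) ↔ Rich u ∧ s ∉ palFactors u := by
      unfold Rich
      rw [palFactors_concat hs]
      simp only [List.length_append, List.length_singleton]
      by_cases hmem : s ∈ palFactors u
      · rw [Finset.insert_eq_self.mpr hmem]
        simp only [hmem, not_true_eq_false, and_false, iff_false]
        omega
      · rw [Finset.card_insert_of_notMem hmem]
        simp only [hmem, not_false_eq_true, and_true]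
        omega
    have hRHS : (∀ v : List α, v <+: u ++ [a] → v ≠ [] →
          ∃ t, IsLPS v t ∧ numOcc t v = 1)
        ↔ ((∀ v : List α, v <+: u → v ≠ [] → ∃ t, IsLPS v t ∧ numOcc t v = 1) ∧
            numOcc s (u ++ [a]) = 1) := by
      constructor
      · intro h
        refine ⟨fun v hv hvne => h v (hv.trans (List.prefix_append u [a])) hvne, ?_⟩
        obtain ⟨t, ht, htocc⟩ := h (u ++ [a]) List.prefix_rfl (by simp)
        rwa [IsLPS.unique hs ht]
      · rintro ⟨h, hocc⟩ v hv hvne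
        rcases List.prefix_concat_iff.mp hv with rfl | hv'
        · exact ⟨s, hs, hocc⟩
        · exact h v hv' hvne
    rw [hkey, hRHS, ih, hone]
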